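/- Let n, k, t be positive integers with k ≥ t + 1 and n ≥ 2k - t + 1, let V be an n-dimensional vector space over F_q, let U₁, U₂ be k-dimensional subspaces, and let E be a t-dimensional subspace of U₁ with U₁ ∩ U₂ ⊆ E and dim(U₁ ∩ U₂) = t - 1. Then the family H(U₁,U₂,E) = {F : F is a k-subspace of V, E ⊆ F, dim(F ∩ U₂) ≥ t} ∪ {U₁, U₂} has size [n-t choose k-t]_q - q^((k-t+1)(k-t)) [n-k-1 choose k-t]_q + 2. -/

import Mathlib

open Module

/-- The Gaussian binomial coefficient `[n choose k]_q`, via the product formula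
`∏ i < k, (q^(n-i) - 1)/(q^(k-i) - 1)` (the division is exact for `q ≥ 2`, `k ≤ n`). -/
def gaussBinom (q n k : ℕ) : ℕ :=
  (∏ i ∈ Finset.range k, (q ^ (n - i) - 1)) / (∏ i ∈ Finset.range k, (q ^ (k - i) - 1))

open Module Submodule

section Counting

variable {K V : Type*} [Field K] [Fintype K] [AddCommGroup V] [Module K V]
  [FiniteDimensional K V]

local notation "q" => Fintype.card K

lemma finrank_map_add_finrank_inf_ker {W : Type*} [AddCommGroup W] [Module K W]
    (f : V →ₗ[K] W) (p : Submodule K V) :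
    finrank K ↥(p.map f) + finrank K ↥(p ⊓ LinearMap.ker f) = finrank K ↥p := by
  have h := LinearMap.finrank_range_add_finrank_ker (f.domRestrict p)
  rw [LinearMap.range_domRestrict, LinearMap.ker_domRestrict] at h
  have e1 : comap p.subtype (LinearMap.ker f) = comap p.subtype (p ⊓ LinearMap.ker f) := by
    ext x; simp [x.2]
  have e2 : finrank K ↥(comap p.subtype (p ⊓ LinearMap.ker f)) =
      finrank K ↥(p ⊓ LinearMap.ker f) :=
    (Submodule.comapSubtypeEquivOfLe inf_le_left).finrank_eq
  rw [e1, e2] at h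
  exact h

end Counting

section Counting2
set_option linter.unusedSectionVars false

variable {K V : Type*} [Field K] [Fintype K] [AddCommGroup V] [Module K V]
  [FiniteDimensional K V]

local notation "q" => Fintype.card K

lemma card_tuple_mod (D : Submodule K V) (j : ℕ) (hj : j + finrank K ↥D ≤ finrank K V) :
    Nat.card {f : Fin j → V // LinearIndependent K (D.mkQ ∘ f)} =
      q ^ (finrank K ↥D * j) *
        ∏ i ∈ Finset.range j, (q ^ (finrank K V - finrank K ↥D) - q ^ i) := by
  have : Finite V := Module.finite_of_finite K
  obtain ⟨s, hs⟩ := D.mkQ.exists_rightInverse_of_surjective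
    (LinearMap.range_eq_top.2 (Submodule.mkQ_surjective D))
  have hsec : ∀ x : V ⧸ D, D.mkQ (s x) = x := fun x => congrFun (congrArg DFunLike.coe hs) x
  have hz : ∀ x : D, D.mkQ (x : V) = 0 := fun x => by
    rw [Submodule.mkQ_apply]; exact (Submodule.Quotient.mk_eq_zero D).2 x.2
  have e : {f : Fin j → V // LinearIndependent K (D.mkQ ∘ f)} ≃
      {g : Fin j → V ⧸ D // LinearIndependent K g} × (Fin j → D) :=
    { toFun := fun f => (⟨D.mkQ ∘ f.1, f.2⟩,
        fun i => ⟨f.1 i - s (D.mkQ (f.1 i)), by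
          rw [← Submodule.Quotient.mk_eq_zero, ← Submodule.mkQ_apply, map_sub, hsec, sub_self]⟩)
      invFun := fun p => ⟨fun i => s (p.1.1 i) + (p.2 i : V), by
        have : D.mkQ ∘ (fun i => s (p.1.1 i) + (p.2 i : V)) = p.1.1 := by
          funext i
          simp only [Function.comp_apply, map_add, ← Submodule.mkQ_apply, hsec, hz, add_zero]
        rw [this]; exact p.1.2⟩
      left_inv := fun f => by
        apply Subtype.ext; funext i; simp
      right_inv := fun p => by
        refine Prod.ext (Subtype.ext ?_) ?_
        · funext i
          simp only [Function.comp_apply, map_add, ← Submodule.mkQ_apply, hsec, hz, add_zero]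
        · funext i
          apply Subtype.ext
          simp only [map_add, hsec, hz, map_zero, add_zero]
          abel }
  rw [Nat.card_congr e, Nat.card_prod]
  have : Finite (V ⧸ D) := Quotient.finite _
  have hq : finrank K (V ⧸ D) = finrank K V - finrank K ↥D := Submodule.finrank_quotient D
  have h1 : Nat.card {g : Fin j → V ⧸ D // LinearIndependent K g} =
      ∏ i ∈ Finset.range j, (q ^ (finrank K V - finrank K ↥D) - q ^ i) := by
    rw [card_linearIndependent (by omega), hq, Finset.prod_range fun i => q ^ (finrank K V - finrank K ↥D) - q ^ i]
  have h2 : Nat.card (Fin j → D) = q ^ (finrank K ↥D * j) := by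
    have : Finite D := Module.finite_of_finite K
    have : Fintype D := Fintype.ofFinite _
    rw [Nat.card_eq_fintype_card, Fintype.card_fun, card_eq_pow_finrank (K := K) (V := D),
      Fintype.card_fin, ← pow_mul]
  rw [h1, h2]; ring
end Counting2

section Counting3
set_option linter.unusedSectionVars false

variable {K V : Type*} [Field K] [Fintype K] [AddCommGroup V] [Module K V]
  [FiniteDimensional K V]

local notation "q" => Fintype.card K

lemma card_fiber (D X : Submodule K V) (j : ℕ) (hX : finrank K ↥X = j) (hXD : X ⊓ D = ⊥) :
    Nat.card {f : Fin j → V //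
        LinearIndependent K (D.mkQ ∘ f) ∧ Submodule.span K (Set.range f) = X} =
      ∏ i ∈ Finset.range j, (q ^ j - q ^ i) := by
  have : Finite V := Module.finite_of_finite K
  have e1 : {f : Fin j → V //
        LinearIndependent K (D.mkQ ∘ f) ∧ Submodule.span K (Set.range f) = X} ≃
      {f : Fin j → V // LinearIndependent K f ∧ Submodule.span K (Set.range f) = X} := by
    apply Equiv.subtypeEquivRight
    intro f
    constructor
    · rintro ⟨h1, h2⟩
      exact ⟨LinearIndependent.of_comp D.mkQ h1, h2⟩
    · rintro ⟨h1, h2⟩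
      refine ⟨h1.map ?_, h2⟩
      rw [h2, Submodule.ker_mkQ]
      exact disjoint_iff.2 hXD
  have e2 : {f : Fin j → V // LinearIndependent K f ∧ Submodule.span K (Set.range f) = X} ≃
      {g : Fin j → ↥X // LinearIndependent K g} :=
    { toFun := fun f => ⟨fun i => ⟨f.1 i, by
        have hm : f.1 i ∈ Submodule.span K (Set.range f.1) :=
          Submodule.subset_span (Set.mem_range_self i)
        rw [f.2.2] at hm; exact hm⟩, by
        apply LinearIndependent.of_comp X.subtype
        exact f.2.1⟩
      invFun := fun g => ⟨X.subtype ∘ g.1, by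
        refine ⟨g.2.map' X.subtype (Submodule.ker_subtype X), ?_⟩
        have htop : Submodule.span K (Set.range g.1) = ⊤ := by
          apply Submodule.eq_top_of_finrank_eq
          rw [finrank_span_eq_card g.2]
          simp [hX]
        rw [Set.range_comp, ← Submodule.map_span, htop, Submodule.map_top,
          Submodule.range_subtype]⟩
      left_inv := fun f => by apply Subtype.ext; funext i; rfl
      right_inv := fun g => by apply Subtype.ext; funext i; apply Subtype.ext; rfl }
  rw [Nat.card_congr (e1.trans e2), card_linearIndependent (by omega), hX]
  rw [Finset.prod_range fun i => q ^ j - q ^ i]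

lemma card_avoid_mul (D : Submodule K V) (j : ℕ) (hj : j + finrank K ↥D ≤ finrank K V) :
    Nat.card {X : Submodule K V // finrank K ↥X = j ∧ X ⊓ D = ⊥} *
        ∏ i ∈ Finset.range j, (q ^ j - q ^ i) =
      q ^ (finrank K ↥D * j) *
        ∏ i ∈ Finset.range j, (q ^ (finrank K V - finrank K ↥D) - q ^ i) := by
  have : Finite V := Module.finite_of_finite K
  have : Finite (Submodule K V) := Finite.of_injective _ SetLike.coe_injective
  classical
  set S := {X : Submodule K V // finrank K ↥X = j ∧ X ⊓ D = ⊥} with hS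
  set T := {f : Fin j → V // LinearIndependent K (D.mkQ ∘ f)} with hT
  have hπ : ∀ f : T, finrank K ↥(Submodule.span K (Set.range f.1)) = j ∧
      Submodule.span K (Set.range f.1) ⊓ D = ⊥ := by
    intro f
    constructor
    · rw [finrank_span_eq_card (LinearIndependent.of_comp D.mkQ f.2)]; simp
    · rw [eq_bot_iff]
      rintro v ⟨hv1, hv2⟩
      obtain ⟨c, rfl⟩ := (mem_span_range_iff_exists_fun K).1 hv1
      have hz : D.mkQ (∑ i, c i • f.1 i) = 0 := by
        rw [Submodule.mkQ_apply]
        exact (Submodule.Quotient.mk_eq_zero D).2 hv2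
      have hzz : ∑ i, c i • (D.mkQ ∘ f.1) i = 0 := by
        simp only [Function.comp_apply, ← map_smul, ← map_sum]
        exact hz
      have hc := (Fintype.linearIndependent_iff.1 f.2) c hzz
      simp [hc]
  let π : T → S := fun f => ⟨Submodule.span K (Set.range f.1), hπ f⟩
  letI : Fintype S := Fintype.ofFinite _
  letI : Fintype T := Fintype.ofFinite _
  letI : ∀ X : S, Fintype {f : T // π f = X} := fun X => Fintype.ofFinite _
  have fibcard : ∀ X : S, Nat.card {f : T // π f = X} =
      ∏ i ∈ Finset.range j, (q ^ j - q ^ i) := by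
    intro X
    rw [← card_fiber D X.1 j X.2.1 X.2.2]
    apply Nat.card_congr
    exact { toFun := fun f => ⟨f.1.1, f.1.2, congrArg Subtype.val f.2⟩
            invFun := fun f => ⟨⟨f.1, f.2.1⟩, Subtype.ext f.2.2⟩
            left_inv := fun f => by apply Subtype.ext; rfl
            right_inv := fun f => by apply Subtype.ext; rfl }
  have key : Nat.card T = Nat.card S * ∏ i ∈ Finset.range j, (q ^ j - q ^ i) := by
    rw [Nat.card_congr (Equiv.sigmaFiberEquiv π).symm, Nat.card_eq_fintype_card,
      Fintype.card_sigma,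
      Finset.sum_congr rfl (fun X _ => by rw [← Nat.card_eq_fintype_card, fibcard X]),
      Finset.sum_const, Finset.card_univ, smul_eq_mul, Nat.card_eq_fintype_card]
  rw [← key, hT, card_tuple_mod D j hj]

end Counting3

section Counting4
set_option linter.unusedSectionVars false

variable {K V : Type*} [Field K] [Fintype K] [AddCommGroup V] [Module K V]
  [FiniteDimensional K V]

local notation "q" => Fintype.card K

lemma prod_sub_pow_eq (m j : ℕ) (hq : 2 ≤ q) (hj : j ≤ m) :
    ∏ i ∈ Finset.range j, (q ^ m - q ^ i) =
      q ^ (∑ i ∈ Finset.range j, i) * ∏ i ∈ Finset.range j, (q ^ (m - i) - 1) := by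
  rw [← Finset.prod_pow_eq_pow_sum, ← Finset.prod_mul_distrib]
  apply Finset.prod_congr rfl
  intro i hi
  have hi' : i < j := Finset.mem_range.1 hi
  have : q ^ i * q ^ (m - i) = q ^ m := by rw [← pow_add]; congr 1; omega
  rw [Nat.mul_sub, this, mul_one]

lemma denom_pos (j : ℕ) (hq : 2 ≤ q) : 0 < ∏ i ∈ Finset.range j, (q ^ (j - i) - 1) := by
  apply Finset.prod_pos
  intro i hi
  have hi' := Finset.mem_range.1 hi
  have : 1 < q ^ (j - i) := Nat.one_lt_pow (by omega) (by omega)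
  omega

lemma prodP_pos (j : ℕ) (hq : 2 ≤ q) : 0 < ∏ i ∈ Finset.range j, (q ^ j - q ^ i) := by
  apply Finset.prod_pos
  intro i hi
  have := Finset.mem_range.1 hi
  have : q ^ i < q ^ j := Nat.pow_lt_pow_right (by omega) (by omega)
  omega

/-- Subspace count in the model space; key divisibility. -/
lemma card_grassmann_mul (j : ℕ) (hj : j ≤ finrank K V) :
    Nat.card {X : Submodule K V // finrank K ↥X = j} *
        ∏ i ∈ Finset.range j, (q ^ j - q ^ i) =
      ∏ i ∈ Finset.range j, (q ^ (finrank K V) - q ^ i) := by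
  have h := card_avoid_mul (K := K) (V := V) ⊥ j (by simpa using hj)
  simp only [finrank_bot, Nat.sub_zero, Nat.zero_mul, pow_zero, one_mul, Nat.mul_zero] at h
  rw [← h]
  congr 1
  apply Nat.card_congr
  exact Equiv.subtypeEquivRight (fun X => by simp)

lemma gaussBinom_mul (m j : ℕ) (hj : j ≤ m) :
    gaussBinom q m j * ∏ i ∈ Finset.range j, (q ^ j - q ^ i) =
      ∏ i ∈ Finset.range j, (q ^ m - q ^ i) := by
  have hq : 2 ≤ q := Fintype.one_lt_card
  have hmod : finrank K (Fin m → K) = m := by simp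
  have h := card_grassmann_mul (K := K) (V := Fin m → K) j (by omega)
  rw [hmod] at h
  -- derive the clean division identity
  have h2 : Nat.card {X : Submodule K (Fin m → K) // finrank K ↥X = j} *
      ∏ i ∈ Finset.range j, (q ^ (j - i) - 1) = ∏ i ∈ Finset.range j, (q ^ (m - i) - 1) := by
    have e1 := prod_sub_pow_eq m j hq hj
    have e2 := prod_sub_pow_eq j j hq le_rfl
    rw [e1, e2] at h
    have hpow : 0 < q ^ (∑ i ∈ Finset.range j, i) := Nat.pow_pos (by omega)
    apply Nat.eq_of_mul_eq_mul_left hpow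
    calc q ^ (∑ i ∈ Finset.range j, i) *
          (Nat.card {X : Submodule K (Fin m → K) // finrank K ↥X = j} *
            ∏ i ∈ Finset.range j, (q ^ (j - i) - 1))
        = Nat.card {X : Submodule K (Fin m → K) // finrank K ↥X = j} *
            (q ^ (∑ i ∈ Finset.range j, i) * ∏ i ∈ Finset.range j, (q ^ (j - i) - 1)) := by ring
      _ = q ^ (∑ i ∈ Finset.range j, i) * ∏ i ∈ Finset.range j, (q ^ (m - i) - 1) := h
      _ = q ^ (∑ i ∈ Finset.range j, i) * ∏ i ∈ Finset.range j, (q ^ (m - i) - 1) := rfl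
  have hgb : gaussBinom q m j = Nat.card {X : Submodule K (Fin m → K) // finrank K ↥X = j} := by
    rw [gaussBinom, ← h2, Nat.mul_div_cancel _ (denom_pos j hq)]
  rw [hgb, h]

lemma card_grassmann (j : ℕ) (hj : j ≤ finrank K V) :
    Nat.card {X : Submodule K V // finrank K ↥X = j} = gaussBinom q (finrank K V) j := by
  have hq : 2 ≤ q := Fintype.one_lt_card
  apply Nat.eq_of_mul_eq_mul_right (prodP_pos j hq)
  rw [card_grassmann_mul j hj, gaussBinom_mul _ _ hj]

lemma card_avoid (D : Submodule K V) (j : ℕ) (hj : j + finrank K ↥D ≤ finrank K V) :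
    Nat.card {X : Submodule K V // finrank K ↥X = j ∧ X ⊓ D = ⊥} =
      q ^ (finrank K ↥D * j) * gaussBinom q (finrank K V - finrank K ↥D) j := by
  have hq : 2 ≤ q := Fintype.one_lt_card
  apply Nat.eq_of_mul_eq_mul_right (prodP_pos j hq)
  rw [card_avoid_mul D j hj, mul_assoc, gaussBinom_mul _ _ (by omega)]

end Counting4
section Main

open Module Submodule

theorem stmt_8 {K V : Type*} [Field K] [Fintype K] [AddCommGroup V] [Module K V]
    [FiniteDimensional K V] (q n k t : ℕ) (hq : Fintype.card K = q)
    (hn : finrank K V = n) (hk : 0 < k) (ht : 0 < t) (htk : t + 1 ≤ k)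
    (hnk : 2 * k - t + 1 ≤ n)
    (U₁ U₂ E : Submodule K V) (hU₁ : finrank K ↥U₁ = k) (hU₂ : finrank K ↥U₂ = k)
    (hE : finrank K ↥E = t) (hEU₁ : E ≤ U₁) (hUU : U₁ ⊓ U₂ ≤ E)
    (hUUdim : finrank K ↥(U₁ ⊓ U₂) = t - 1) :
    (({F : Submodule K V | finrank K ↥F = k ∧ E ≤ F ∧ t ≤ finrank K ↥(F ⊓ U₂)} ∪
        {U₁, U₂}).ncard : ℤ) =
      (gaussBinom q (n - t) (k - t) : ℤ) -
        (q : ℤ) ^ ((k - t + 1) * (k - t)) * gaussBinom q (n - k - 1) (k - t) + 2 := by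
  subst hq hn
  classical
  haveI : Finite V := Module.finite_of_finite K
  haveI : Finite (Submodule K V) := Finite.of_injective _ SetLike.coe_injective
  haveI : Finite (V ⧸ E) := Quotient.finite _
  haveI : Finite (Submodule K (V ⧸ E)) := Finite.of_injective _ SetLike.coe_injective
  set A : Set (Submodule K V) :=
    {F : Submodule K V | finrank K ↥F = k ∧ E ≤ F ∧ t ≤ finrank K ↥(F ⊓ U₂)} with hA
  have hkV : k ≤ finrank K V := by rw [← hU₁]; exact Submodule.finrank_le U₁
  have hEU2 : E ⊓ U₂ = U₁ ⊓ U₂ :=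
    le_antisymm (inf_le_inf_right U₂ hEU₁) (le_inf hUU inf_le_right)
  have hQ : finrank K (V ⧸ E) = finrank K V - t := by
    rw [Submodule.finrank_quotient, hE]
  have hU2bar : finrank K ↥(U₂.map E.mkQ) = k - t + 1 := by
    have h := finrank_map_add_finrank_inf_ker E.mkQ U₂
    rw [Submodule.ker_mkQ, inf_comm U₂ E, hEU2, hUUdim, hU₂] at h
    omega
  have hmapF : ∀ F : Submodule K V, E ≤ F →
      finrank K ↥(F.map E.mkQ) + t = finrank K ↥F := by
    intro F hEF
    have h := finrank_map_add_finrank_inf_ker E.mkQ F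
    rw [Submodule.ker_mkQ, inf_eq_right.2 hEF, hE] at h
    exact h
  have hmapinf : ∀ F : Submodule K V, E ≤ F →
      (F ⊓ U₂).map E.mkQ = F.map E.mkQ ⊓ U₂.map E.mkQ := by
    intro F hEF
    apply le_antisymm
    · exact le_inf (Submodule.map_mono inf_le_left) (Submodule.map_mono inf_le_right)
    · rintro x ⟨hx1, hx2⟩
      obtain ⟨v, hv, rfl⟩ := hx1
      obtain ⟨u, hu, hux⟩ := hx2
      have hvu : v - u ∈ E := by
        rw [← Submodule.ker_mkQ E, LinearMap.mem_ker, map_sub, hux, sub_self]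
      have huF : u ∈ F := by
        have : v - (v - u) ∈ F := F.sub_mem hv (hEF hvu)
        simpa using this
      exact ⟨u, ⟨huF, hu⟩, hux⟩
  have hrankinf : ∀ F : Submodule K V, E ≤ F →
      finrank K ↥(F.map E.mkQ ⊓ U₂.map E.mkQ) + (t - 1) = finrank K ↥(F ⊓ U₂) := by
    intro F hEF
    have h := finrank_map_add_finrank_inf_ker E.mkQ (F ⊓ U₂)
    have h2 : F ⊓ U₂ ⊓ LinearMap.ker E.mkQ = U₁ ⊓ U₂ := by
      rw [Submodule.ker_mkQ, ← hEU2]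
      apply le_antisymm
      · exact le_inf inf_le_right (inf_le_left.trans inf_le_right)
      · exact le_inf (le_inf (inf_le_left.trans hEF) inf_le_right) inf_le_left
    rw [h2, hUUdim, hmapinf F hEF] at h
    exact h
  have hiff : ∀ F : Submodule K V, E ≤ F →
      (t ≤ finrank K ↥(F ⊓ U₂) ↔ F.map E.mkQ ⊓ U₂.map E.mkQ ≠ ⊥) := by
    intro F hEF
    rw [← hrankinf F hEF]
    constructor
    · intro h hbot
      rw [hbot, finrank_bot] at h
      omega
    · intro h
      have : finrank K ↥(F.map E.mkQ ⊓ U₂.map E.mkQ) ≠ 0 :=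
        fun h0 => h (Submodule.finrank_eq_zero.1 h0)
      omega
  -- the bijection with the quotient picture
  have e : ↥A ≃ {X : Submodule K (V ⧸ E) //
      finrank K ↥X = k - t ∧ X ⊓ U₂.map E.mkQ ≠ ⊥} :=
    { toFun := fun F => ⟨F.1.map E.mkQ, by
        obtain ⟨h1, h2, h3⟩ := F.2
        refine ⟨?_, (hiff F.1 h2).1 h3⟩
        have := hmapF F.1 h2
        omega⟩
      invFun := fun X => ⟨Submodule.comap E.mkQ X.1, by
        have hEF : E ≤ Submodule.comap E.mkQ X.1 := by
          intro x hx
          have hx0 : E.mkQ x = 0 := by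
            rw [Submodule.mkQ_apply]
            exact (Submodule.Quotient.mk_eq_zero E).2 hx
          show E.mkQ x ∈ X.1
          rw [hx0]; exact X.1.zero_mem
        have hmap : (Submodule.comap E.mkQ X.1).map E.mkQ = X.1 := by
          rw [Submodule.map_comap_eq, Submodule.range_mkQ, top_inf_eq]
        have hrk := hmapF _ hEF
        rw [hmap, X.2.1] at hrk
        refine ⟨by omega, hEF, (hiff _ hEF).2 ?_⟩
        rw [hmap]; exact X.2.2⟩
      left_inv := fun F => by
        apply Subtype.ext
        show Submodule.comap E.mkQ (F.1.map E.mkQ) = F.1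
        rw [Submodule.comap_map_mkQ, sup_eq_right.2 F.2.2.1]
      right_inv := fun X => by
        apply Subtype.ext
        show (Submodule.comap E.mkQ X.1).map E.mkQ = X.1
        rw [Submodule.map_comap_eq, Submodule.range_mkQ, top_inf_eq] }
  -- counting in the quotient
  have Ntot : Nat.card {X : Submodule K (V ⧸ E) // finrank K ↥X = k - t} =
      gaussBinom (Fintype.card K) (finrank K V - t) (k - t) := by
    rw [card_grassmann (k - t) (by rw [hQ]; omega), hQ]
  have Nbad : Nat.card {X : Submodule K (V ⧸ E) //
        finrank K ↥X = k - t ∧ X ⊓ U₂.map E.mkQ = ⊥} =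
      (Fintype.card K) ^ ((k - t + 1) * (k - t)) *
        gaussBinom (Fintype.card K) (finrank K V - k - 1) (k - t) := by
    rw [card_avoid (U₂.map E.mkQ) (k - t) (by rw [hU2bar, hQ]; omega), hU2bar, hQ]
    congr 2
    omega
  have hsplit : Nat.card {X : Submodule K (V ⧸ E) // finrank K ↥X = k - t} =
      Nat.card {X : Submodule K (V ⧸ E) //
        finrank K ↥X = k - t ∧ X ⊓ U₂.map E.mkQ = ⊥} +
      Nat.card {X : Submodule K (V ⧸ E) //
        finrank K ↥X = k - t ∧ X ⊓ U₂.map E.mkQ ≠ ⊥} := by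
    rw [← Nat.card_sum]
    apply Nat.card_congr
    refine Equiv.symm ?_
    exact (Equiv.sumCongr (Equiv.subtypeSubtypeEquivSubtypeInter _ _).symm
      (Equiv.subtypeSubtypeEquivSubtypeInter _ _).symm).trans
      (Equiv.sumCompl fun X : {X : Submodule K (V ⧸ E) // finrank K ↥X = k - t} =>
        X.1 ⊓ U₂.map E.mkQ = ⊥)
  -- the two extra subspaces
  have hU1A : U₁ ∉ A := by
    intro h
    have h3 := h.2.2
    rw [hUUdim] at h3
    omega
  have hU2A : U₂ ∉ A := by
    intro h
    have hEle : E ≤ U₁ ⊓ U₂ := le_inf hEU₁ h.2.1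
    have := Submodule.finrank_mono hEle
    rw [hE, hUUdim] at this
    omega
  have hne : U₁ ≠ U₂ := by
    intro h
    rw [h, inf_idem, hU₂] at hUUdim
    omega
  have hdisj : Disjoint A ({U₁, U₂} : Set (Submodule K V)) := by
    rw [Set.disjoint_right]
    intro x hx
    rcases hx with rfl | hx
    · exact hU1A
    · rw [Set.mem_singleton_iff] at hx
      subst hx
      exact hU2A
  have hunion : (A ∪ {U₁, U₂}).ncard = A.ncard + 2 := by
    rw [Set.ncard_union_eq hdisj (Set.toFinite A) (Set.toFinite _), Set.ncard_pair hne]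
  have hAcard : A.ncard = Nat.card {X : Submodule K (V ⧸ E) //
      finrank K ↥X = k - t ∧ X ⊓ U₂.map E.mkQ ≠ ⊥} := by
    rw [← Nat.card_coe_set_eq]
    exact Nat.card_congr e
  rw [hunion, hAcard]
  rw [Ntot, Nbad] at hsplit
  have := congrArg (Nat.cast : ℕ → ℤ) hsplit
  push_cast at this ⊢
  linarith
end Main
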